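/- arXiv:1103.0542 — 3 statements merged into one kernel-verified Lean document; each statement's English description precedes it below -/
import Mathlib

section
/- There exists a constant M₅ > 0 such that ‖C∇Ψ(x) − C∇Ψ(y)‖_s ≤ M₅ ‖x − y‖_s for all x, y ∈ H^s; moreover, the functions C^N∇Ψ^N : H^s → H^s satisfy the same global Lipschitz bound with a constant that can be chosen independently of N. -/
open MeasureTheory ProbabilityTheory Real Filter
open scoped ENNReal NNReal Topology

noncomputable section

/-- The model space for every Sobolev-like space `H^r`: the Hilbert space `ℓ²(ℕ; ℝ)`.
An element `u : Hsp`, viewed as a point of `H^r`, represents the sequence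
`(x_j)_{j ≥ 1}` with `x_{j+1} = (j+1)^{-r} * u j` (so that `‖u‖ = ‖x‖_r`,
and the indices are shifted by one: `j : ℕ` stands for the coordinate `j+1 ≥ 1`). -/
abbrev Hsp : Type := lp (fun _ : ℕ => ℝ) 2

/-- the weight `(j+1)^r`. -/
def wt (r : ℝ) (j : ℕ) : ℝ := ((j : ℝ) + 1) ^ r

/-- the coordinates of `u : Hsp` viewed as an element of `H^r`. -/
def seqr (r : ℝ) (u : Hsp) (j : ℕ) : ℝ := wt (-r) j * u j

/-- the `H^r` norm of a raw sequence. -/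
def rnorm (r : ℝ) (a : ℕ → ℝ) : ℝ := (∑' j, wt (2 * r) j * a j ^ 2) ^ ((1 : ℝ) / 2)

theorem memℓp_of_eventually_zero (f : ℕ → ℝ) (N : ℕ) (hf : ∀ j, N ≤ j → f j = 0) :
    Memℓp f 2 := by
  apply memℓp_gen
  apply summable_of_ne_finset_zero (s := Finset.range N)
  intro j hj
  rw [Finset.mem_range, not_lt] at hj
  rw [hf j hj]
  simp [Real.zero_rpow]

/-- embedding of `X^N ≅ ℝ^N` into `Hsp`, viewing `x : Fin N → ℝ` as the element of `H^s`
whose `(i+1)`-th coordinate is `x i` for `i < N` and `0` beyond. -/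
def ofX (s : ℝ) (N : ℕ) (x : Fin N → ℝ) : Hsp :=
  ⟨fun j => if h : j < N then wt s j * x ⟨j, h⟩ else 0,
   memℓp_of_eventually_zero _ N (fun j hj => dif_neg (Nat.not_lt.mpr hj))⟩

/-- the projection `P^N` (truncation of all coordinates beyond the `N`-th). -/
def PNproj (N : ℕ) (u : Hsp) : Hsp :=
  ⟨fun j => if j < N then u j else 0, by
    apply memℓp_gen
    refine Summable.of_nonneg_of_le (fun j => ?_) (fun j => ?_)
      ((lp.memℓp u).summable (by norm_num))
    · positivity
    · by_cases h : j < N <;> simp [h] <;> positivity⟩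

lemma base_pos (j : ℕ) : (0:ℝ) < (j:ℝ) + 1 := by positivity
lemma one_le_base (j : ℕ) : (1:ℝ) ≤ (j:ℝ) + 1 := by
  have := Nat.cast_nonneg (α := ℝ) j; linarith
lemma wt_pos (r : ℝ) (j : ℕ) : 0 < wt r j := Real.rpow_pos_of_pos (base_pos j) r
lemma wt_mul (a b : ℝ) (j : ℕ) : wt a j * wt b j = wt (a + b) j :=
  (Real.rpow_add (base_pos j) a b).symm
lemma wt_pow (r : ℝ) (n : ℕ) (j : ℕ) : wt r j ^ n = wt ((n:ℝ) * r) j := by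
  unfold wt
  rw [← Real.rpow_natCast (((j:ℝ)+1) ^ r) n, ← Real.rpow_mul (base_pos j).le, mul_comm]
lemma wt_le_one {r : ℝ} (hr : r ≤ 0) (j : ℕ) : wt r j ≤ 1 :=
  Real.rpow_le_one_of_one_le_of_nonpos (one_le_base j) hr
lemma wt_zero (j : ℕ) : wt 0 j = 1 := Real.rpow_zero _

lemma hnorm_sq (d : Hsp) : ‖d‖ ^ 2 = ∑' j, (d j : ℝ) ^ 2 := by
  have h := lp.norm_rpow_eq_tsum (p := 2) (by norm_num) d
  simp only [ENNReal.toReal_ofNat] at h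
  rw [show (2:ℝ) = ((2:ℕ):ℝ) by norm_num] at h
  simpa [Real.rpow_natCast, Real.norm_eq_abs, sq_abs] using h

lemma hd2_summable (d : Hsp) : Summable (fun j => (d j : ℝ) ^ 2) := by
  have h := (lp.memℓp d).summable (p := 2) (by norm_num)
  simp only [ENNReal.toReal_ofNat] at h
  rw [show (2:ℝ) = ((2:ℕ):ℝ) by norm_num] at h
  simpa [Real.rpow_natCast, Real.norm_eq_abs, sq_abs] using h

/-- key estimate: if each weighted term is bounded by `c⁴ * d j ^ 2`, then
`rnorm s f ≤ c² * ‖d‖`. -/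
lemma rnorm_le_of_bound (s c : ℝ) (hc : 0 ≤ c) (d : Hsp) (f : ℕ → ℝ)
    (hf : ∀ j, wt (2 * s) j * f j ^ 2 ≤ c ^ 4 * (d j) ^ 2) :
    rnorm s f ≤ c ^ 2 * ‖d‖ := by
  have hsum : Summable (fun j => c ^ 4 * (d j) ^ 2) := (hd2_summable d).mul_left _
  have hT : ∑' j, wt (2 * s) j * f j ^ 2 ≤ c ^ 4 * ‖d‖ ^ 2 := by
    calc ∑' j, wt (2 * s) j * f j ^ 2 ≤ ∑' j, c ^ 4 * (d j) ^ 2 := by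
          refine Summable.tsum_le_tsum hf ?_ hsum
          refine Summable.of_nonneg_of_le (fun j => ?_) hf hsum
          have := wt_pos (2 * s) j; positivity
      _ = c ^ 4 * ∑' j, (d j) ^ 2 := tsum_mul_left
      _ = c ^ 4 * ‖d‖ ^ 2 := by rw [hnorm_sq]
  have hT0 : 0 ≤ ∑' j, wt (2 * s) j * f j ^ 2 := by
    refine tsum_nonneg fun j => ?_
    have := wt_pos (2 * s) j; positivity
  have he : (c ^ 4 * ‖d‖ ^ 2) ^ ((1:ℝ)/2) = c ^ 2 * ‖d‖ := by
    rw [show c ^ 4 * ‖d‖ ^ 2 = (c ^ 2 * ‖d‖) ^ 2 by ring,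
      ← Real.rpow_natCast (c ^ 2 * ‖d‖) 2, ← Real.rpow_mul (by positivity)]
    norm_num
  calc rnorm s f ≤ (c ^ 4 * ‖d‖ ^ 2) ^ ((1:ℝ)/2) :=
        Real.rpow_le_rpow hT0 hT (by norm_num)
    _ = c ^ 2 * ‖d‖ := he

theorem statement_1 (lam : ℕ → ℝ) (κ cminus cplus s : ℝ) (Ψ : Hsp → ℝ) (gradΨ : Hsp → Hsp)
    (M₁ M₂ M₃ M₄ : ℝ)
    (hκ : 1/2 < κ) (hcminus : 0 < cminus) (hcpm : cminus ≤ cplus)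
    (hlampos : ∀ j : ℕ, 0 < lam j)
    (hlam : ∀ j : ℕ, cminus * wt (-κ) j ≤ lam j ∧ lam j ≤ cplus * wt (-κ) j)
    (hs0 : 0 ≤ s) (hsκ : s < κ - 1/2)
    (hΨdiff : Differentiable ℝ Ψ) (hΨdiff2 : Differentiable ℝ (fderiv ℝ Ψ))
    (hgradrep : ∀ x h : Hsp, fderiv ℝ Ψ x h = ∑' j, seqr (-s) (gradΨ x) j * seqr s h j)
    (hΨlb : ∀ x : Hsp, M₁ ≤ Ψ x) (hΨub : ∀ x : Hsp, Ψ x ≤ M₂ * (1 + ‖x‖ ^ 2))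
    (hgradb : ∀ x : Hsp, ‖gradΨ x‖ ≤ M₃ * (1 + ‖x‖))
    (hhessb : ∀ x : Hsp, ‖fderiv ℝ (fderiv ℝ Ψ) x‖ ≤ M₄):
    ∃ M₅ : ℝ, 0 < M₅ ∧
      (∀ x y : Hsp,
        rnorm s (fun j => lam j ^ 2 * seqr (-s) (gradΨ x) j
            - lam j ^ 2 * seqr (-s) (gradΨ y) j) ≤ M₅ * ‖x - y‖) ∧
      (∀ (N : ℕ) (x y : Hsp),
        rnorm s (fun j =>
            (if j < N then lam j ^ 2 * seqr (-s) (gradΨ (PNproj N x)) j else 0)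
            - (if j < N then lam j ^ 2 * seqr (-s) (gradΨ (PNproj N y)) j else 0))
          ≤ M₅ * ‖x - y‖) := by
  have hcplus : 0 < cplus := lt_of_lt_of_le hcminus hcpm
  have hM₄0 : 0 ≤ M₄ := le_trans (norm_nonneg (fderiv ℝ (fderiv ℝ Ψ) 0)) (hhessb 0)
  -- the representation as an inner product
  have hrep : ∀ x h : Hsp, fderiv ℝ Ψ x h = (inner ℝ (gradΨ x) h : ℝ) := by
    intro x h
    rw [hgradrep x h, lp.inner_eq_tsum]
    congr 1; funext j
    have hws : wt s j * wt (-s) j = 1 := by rw [wt_mul]; simp [wt_zero]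
    simp only [seqr, neg_neg, RCLike.inner_apply, conj_trivial]
    linear_combination (gradΨ x j : ℝ) * (h j : ℝ) * hws
  -- gradΨ is Lipschitz with constant M₄
  have hglip : ∀ x y : Hsp, ‖gradΨ x - gradΨ y‖ ≤ M₄ * ‖x - y‖ := by
    intro x y
    have hA : ‖fderiv ℝ Ψ x - fderiv ℝ Ψ y‖ ≤ M₄ * ‖x - y‖ := by
      have := Convex.norm_image_sub_le_of_norm_fderiv_le
        (f := fderiv ℝ Ψ) (s := Set.univ) (C := M₄)
        (fun z _ => hΨdiff2 z) (fun z _ => hhessb z) convex_univ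
        (Set.mem_univ y) (Set.mem_univ x)
      simpa using this
    set g := gradΨ x - gradΨ y with hg
    have h1 : ‖g‖ ^ 2 = (fderiv ℝ Ψ x - fderiv ℝ Ψ y) g := by
      rw [← real_inner_self_eq_norm_sq, hg, inner_sub_left, ← hrep x g, ← hrep y g]
      simp [hg, map_sub]; ring
    have h2 : (fderiv ℝ Ψ x - fderiv ℝ Ψ y) g ≤ M₄ * ‖x - y‖ * ‖g‖ := by
      calc (fderiv ℝ Ψ x - fderiv ℝ Ψ y) g ≤ ‖(fderiv ℝ Ψ x - fderiv ℝ Ψ y) g‖ :=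
            le_abs_self _
        _ ≤ ‖fderiv ℝ Ψ x - fderiv ℝ Ψ y‖ * ‖g‖ :=
            (fderiv ℝ Ψ x - fderiv ℝ Ψ y).le_opNorm g
        _ ≤ M₄ * ‖x - y‖ * ‖g‖ := by
            exact mul_le_mul_of_nonneg_right hA (norm_nonneg g)
    have h3 : ‖g‖ ^ 2 ≤ M₄ * ‖x - y‖ * ‖g‖ := h1 ▸ h2
    rcases eq_or_lt_of_le (norm_nonneg g) with h0 | h0
    · rw [← h0]; positivity
    · nlinarith
  -- the weight bound
  have hwtb : ∀ j : ℕ, wt (2 * s) j * (lam j ^ 2 * wt s j) ^ 2 ≤ cplus ^ 4 := by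
    intro j
    have h4 : lam j ^ 4 ≤ cplus ^ 4 * wt ((4:ℝ) * -κ) j := by
      calc lam j ^ 4 ≤ (cplus * wt (-κ) j) ^ 4 :=
            pow_le_pow_left₀ (hlampos j).le (hlam j).2 4
        _ = cplus ^ 4 * (wt (-κ) j) ^ 4 := by ring
        _ = cplus ^ 4 * wt ((4:ℝ) * -κ) j := by rw [wt_pow]; norm_num
    calc wt (2 * s) j * (lam j ^ 2 * wt s j) ^ 2
        = lam j ^ 4 * (wt (2 * s) j * wt s j ^ 2) := by ring
      _ = lam j ^ 4 * wt (4 * s) j := by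
          rw [wt_pow s 2 j, wt_mul,
            show 2 * s + ((2:ℕ):ℝ) * s = 4 * s by push_cast; ring]
      _ ≤ (cplus ^ 4 * wt ((4:ℝ) * -κ) j) * wt (4 * s) j :=
          mul_le_mul_of_nonneg_right h4 (wt_pos _ _).le
      _ = cplus ^ 4 * wt ((4:ℝ) * -κ + 4 * s) j := by rw [mul_assoc, wt_mul]
      _ ≤ cplus ^ 4 * 1 :=
          mul_le_mul_of_nonneg_left (wt_le_one (by linarith) j) (by positivity)
      _ = cplus ^ 4 := mul_one _
  have hterm : ∀ (d : Hsp) (j : ℕ),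
      wt (2 * s) j * (lam j ^ 2 * wt s j * d j) ^ 2 ≤ cplus ^ 4 * (d j) ^ 2 := by
    intro d j
    have h0 : wt (2 * s) j * (lam j ^ 2 * wt s j * d j) ^ 2
        = (wt (2 * s) j * (lam j ^ 2 * wt s j) ^ 2) * (d j) ^ 2 := by ring
    rw [h0]
    exact mul_le_mul_of_nonneg_right (hwtb j) (sq_nonneg _)
  -- PNproj is a contraction on differences
  have hPN : ∀ (N : ℕ) (x y : Hsp), ‖PNproj N x - PNproj N y‖ ≤ ‖x - y‖ := by
    intro N x y
    have hsq : ‖PNproj N x - PNproj N y‖ ^ 2 ≤ ‖x - y‖ ^ 2 := by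
      rw [hnorm_sq, hnorm_sq]
      refine Summable.tsum_le_tsum (fun j => ?_) ?_ (hd2_summable (x - y))
      · have hc : ((PNproj N x - PNproj N y) j : ℝ)
            = if j < N then ((x - y) j : ℝ) else 0 := by
          simp only [lp.coeFn_sub, Pi.sub_apply, PNproj]
          by_cases h : j < N <;> simp [h, lp.coeFn_sub, Pi.sub_apply]
        rw [hc]
        by_cases h : j < N <;> simp [h] <;> positivity
      · refine Summable.of_nonneg_of_le (fun j => sq_nonneg _) (fun j => ?_)
          (hd2_summable (x - y))
        have hc : ((PNproj N x - PNproj N y) j : ℝ)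
            = if j < N then ((x - y) j : ℝ) else 0 := by
          simp only [lp.coeFn_sub, Pi.sub_apply, PNproj]
          by_cases h : j < N <;> simp [h, lp.coeFn_sub, Pi.sub_apply]
        rw [hc]
        by_cases h : j < N <;> simp [h] <;> positivity
    nlinarith [norm_nonneg (PNproj N x - PNproj N y), norm_nonneg (x - y)]
  refine ⟨cplus ^ 2 * M₄ + 1, by positivity, ?_, ?_⟩
  · intro x y
    have hfin : rnorm s (fun j => lam j ^ 2 * seqr (-s) (gradΨ x) j
        - lam j ^ 2 * seqr (-s) (gradΨ y) j) ≤ cplus ^ 2 * ‖gradΨ x - gradΨ y‖ := by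
      refine rnorm_le_of_bound s cplus hcplus.le (gradΨ x - gradΨ y) _ (fun j => ?_)
      have hc : lam j ^ 2 * seqr (-s) (gradΨ x) j - lam j ^ 2 * seqr (-s) (gradΨ y) j
          = lam j ^ 2 * wt s j * ((gradΨ x - gradΨ y) j) := by
        simp only [seqr, neg_neg, lp.coeFn_sub, Pi.sub_apply]
        ring
      rw [hc]
      exact hterm _ j
    calc rnorm s _ ≤ cplus ^ 2 * ‖gradΨ x - gradΨ y‖ := hfin
      _ ≤ cplus ^ 2 * (M₄ * ‖x - y‖) :=
          mul_le_mul_of_nonneg_left (hglip x y) (by positivity)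
      _ ≤ (cplus ^ 2 * M₄ + 1) * ‖x - y‖ := by
          have := norm_nonneg (x - y); nlinarith
  · intro N x y
    set d := gradΨ (PNproj N x) - gradΨ (PNproj N y) with hd
    have hfin : rnorm s (fun j =>
        (if j < N then lam j ^ 2 * seqr (-s) (gradΨ (PNproj N x)) j else 0)
        - (if j < N then lam j ^ 2 * seqr (-s) (gradΨ (PNproj N y)) j else 0))
        ≤ cplus ^ 2 * ‖d‖ := by
      refine rnorm_le_of_bound s cplus hcplus.le d _ (fun j => ?_)
      by_cases h : j < N
      · have hc : (if j < N then lam j ^ 2 * seqr (-s) (gradΨ (PNproj N x)) j else 0)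
            - (if j < N then lam j ^ 2 * seqr (-s) (gradΨ (PNproj N y)) j else 0)
            = lam j ^ 2 * wt s j * (d j) := by
          simp only [h, if_true, seqr, neg_neg, hd, lp.coeFn_sub, Pi.sub_apply]
          ring
        rw [hc]
        exact hterm _ j
      · have := wt_pos (2 * s) j
        simp only [h, if_false, sub_self]
        rw [show ((0:ℝ)) ^ 2 = 0 by ring, mul_zero]
        positivity
    calc rnorm s _ ≤ cplus ^ 2 * ‖d‖ := hfin
      _ ≤ cplus ^ 2 * (M₄ * ‖PNproj N x - PNproj N y‖) :=
          mul_le_mul_of_nonneg_left (hglip _ _) (by positivity)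
      _ ≤ cplus ^ 2 * (M₄ * ‖x - y‖) := by
          have := hPN N x y
          have h1 : 0 ≤ cplus ^ 2 * M₄ := by positivity
          nlinarith
      _ ≤ (cplus ^ 2 * M₄ + 1) * ‖x - y‖ := by
          have := norm_nonneg (x - y); nlinarith


end
end

section
/- The measures π^N, regarded as probability measures on H^s supported on X^N, converge weakly to π: for every bounded continuous g : H^s → ℝ, ∫ g dπ^N → ∫ g dπ as N → ∞. -/
open MeasureTheory ProbabilityTheory Real Filter
open scoped ENNReal NNReal Topology

noncomputable section

/-- the MALA time step `Δt = N^{-1/3}`. -/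
def Δt (N : ℕ) : ℝ := (N : ℝ) ^ (-(1/3) : ℝ)

/-- `‖u‖²_{C^N} = ∑_{j=1}^N λ_j^{-2} u_j²` on `X^N ≅ ℝ^N`. -/
def cnormsq (lam : ℕ → ℝ) (N : ℕ) (u : Fin N → ℝ) : ℝ :=
  ∑ i : Fin N, (lam i ^ 2)⁻¹ * u i ^ 2

/-- the `H^s` norm of a point of `X^N ≅ ℝ^N`. -/
def xnorm (s : ℝ) (N : ℕ) (u : Fin N → ℝ) : ℝ :=
  (∑ i : Fin N, wt (2 * s) i * u i ^ 2) ^ ((1 : ℝ) / 2)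

/-- `Ψ^N = Ψ ∘ P^N`, as a function on `X^N ≅ ℝ^N`. -/
def PsiN (s : ℝ) (Ψ : Hsp → ℝ) (N : ℕ) (x : Fin N → ℝ) : ℝ := Ψ (ofX s N x)

/-- `μ^N(x) = -(P^N x + C^N ∇Ψ^N(x))` on `X^N ≅ ℝ^N`. -/
def muN (lam : ℕ → ℝ) (s : ℝ) (gradΨ : Hsp → Hsp) (N : ℕ) (x : Fin N → ℝ) : Fin N → ℝ :=
  fun i => -(x i + lam i ^ 2 * seqr (-s) (gradΨ (ofX s N x)) i)

/-- the MALA proposal `y = x + δ μ^N(x) + √(2δ) (C^N)^{1/2} ξ^N`, with `δ = ℓ Δt`. -/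
def propY (lam : ℕ → ℝ) (s : ℝ) (gradΨ : Hsp → Hsp) (ℓ : ℝ) (N : ℕ)
    (x ξ : Fin N → ℝ) : Fin N → ℝ :=
  fun i => x i + (ℓ * Δt N) * muN lam s gradΨ N x i +
    Real.sqrt (2 * (ℓ * Δt N)) * (lam i * ξ i)

/-- the MALA log acceptance ratio `Q^N(x, ξ^N)`. -/
def QN (lam : ℕ → ℝ) (s : ℝ) (Ψ : Hsp → ℝ) (gradΨ : Hsp → Hsp) (ℓ : ℝ) (N : ℕ)
    (x ξ : Fin N → ℝ) : ℝ :=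
  -(1/2) * (cnormsq lam N (propY lam s gradΨ ℓ N x ξ) - cnormsq lam N x)
  - (PsiN s Ψ N (propY lam s gradΨ ℓ N x ξ) - PsiN s Ψ N x)
  - (1 / (4 * (ℓ * Δt N))) *
      (cnormsq lam N (fun i => x i - propY lam s gradΨ ℓ N x ξ i
          - (ℓ * Δt N) * muN lam s gradΨ N (propY lam s gradΨ ℓ N x ξ) i)
       - cnormsq lam N (fun i => propY lam s gradΨ ℓ N x ξ i - x i
          - (ℓ * Δt N) * muN lam s gradΨ N x i))

/-- the law of `ξ^N`: `N` i.i.d. standard Gaussians. -/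
def gaussN (N : ℕ) : Measure (Fin N → ℝ) := Measure.pi fun _ => gaussianReal 0 1

/-- the target `π^N`: the probability measure on `X^N ≅ ℝ^N` whose density with respect to
Lebesgue measure is proportional to `exp(-½‖x‖²_{C^N} - Ψ^N(x))`. -/
def piN (lam : ℕ → ℝ) (s : ℝ) (Ψ : Hsp → ℝ) (N : ℕ) : Measure (Fin N → ℝ) :=
  ((volume.withDensity fun x => ENNReal.ofReal
      (Real.exp (-(1/2) * cnormsq lam N x - PsiN s Ψ N x))) Set.univ)⁻¹ •
  (volume.withDensity fun x => ENNReal.ofReal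
      (Real.exp (-(1/2) * cnormsq lam N x - PsiN s Ψ N x)))

/-- `Z^N(x, ξ^N)`, the Gaussian part of `Q^N`. -/
def ZN (lam : ℕ → ℝ) (ℓ : ℝ) (N : ℕ) (x ξ : Fin N → ℝ) : ℝ :=
  -(ℓ ^ 3) / 4 - (ℓ ^ ((3 : ℝ) / 2) / Real.sqrt 2) * (N : ℝ) ^ (-(1/2) : ℝ) *
      ∑ i : Fin N, (lam i)⁻¹ * ξ i * x i

/-- `i^N(x, ξ^N) = ½ (ℓΔt)² (‖x‖²_{C^N} - ‖(C^N)^{1/2} ξ^N‖²_{C^N})`. -/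
def iN (lam : ℕ → ℝ) (ℓ : ℝ) (N : ℕ) (x ξ : Fin N → ℝ) : ℝ :=
  (1/2) * (ℓ * Δt N) ^ 2 *
    (cnormsq lam N x - cnormsq lam N fun i => lam i * ξ i)

/-- the law of `Z_ℓ ∼ N(-ℓ³/4, ℓ³/2)`. -/
def lawZl (ℓ : ℝ) : Measure ℝ := gaussianReal (-(ℓ ^ 3) / 4) (Real.toNNReal (ℓ ^ 3 / 2))

/-- the limiting mean acceptance probability `α(ℓ) = E[1 ∧ exp(Z_ℓ)]`. -/
def alphaEll (ℓ : ℝ) : ℝ := ∫ z, min 1 (Real.exp z) ∂(lawZl ℓ)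

/-- the speed function `h(ℓ) = ℓ α(ℓ)`. -/
def hEll (ℓ : ℝ) : ℝ := ℓ * alphaEll ℓ

/-- the Gaussian reference measure `π₀^N` on `X^N ≅ ℝ^N`: the law of
`∑_{j=1}^N λ_j ξ_j φ_j` in coordinates, i.e. the product of `N(0, λ_j²)`. -/
def pi0N (lam : ℕ → ℝ) (N : ℕ) : Measure (Fin N → ℝ) :=
  Measure.pi fun i => gaussianReal 0 (Real.toNNReal (lam i ^ 2))

/-- the normalizing constant `M_{Ψ^N} = (∫ exp(-Ψ^N) dπ₀^N)⁻¹`. -/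
def MPsiN (lam : ℕ → ℝ) (s : ℝ) (Ψ : Hsp → ℝ) (N : ℕ) : ℝ :=
  (∫ x, Real.exp (-(PsiN s Ψ N x)) ∂(pi0N lam N))⁻¹

/-- the target `π^N`, defined through `dπ^N/dπ₀^N = M_{Ψ^N} exp(-Ψ^N)`. -/
def piNref (lam : ℕ → ℝ) (s : ℝ) (Ψ : Hsp → ℝ) (N : ℕ) : Measure (Fin N → ℝ) :=
  (pi0N lam N).withDensity fun x =>
    ENNReal.ofReal (MPsiN lam s Ψ N * Real.exp (-(PsiN s Ψ N x)))

instance : MeasurableSpace Hsp := borel Hsp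
instance : BorelSpace Hsp := ⟨rfl⟩

/-- the normalizing constant `M_Ψ = (∫ exp(-Ψ) dπ₀)⁻¹`. -/
def MPsi (Ψ : Hsp → ℝ) (pi0 : Measure Hsp) : ℝ := (∫ u, Real.exp (-(Ψ u)) ∂pi0)⁻¹

/-- the target measure `π` on `H^s`, defined through `dπ/dπ₀ = M_Ψ exp(-Ψ)`. -/
def piInf (Ψ : Hsp → ℝ) (pi0 : Measure Hsp) : Measure Hsp :=
  pi0.withDensity fun u => ENNReal.ofReal (MPsi Ψ pi0 * Real.exp (-(Ψ u)))

-- aux lemmas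
lemma coord_cont (j : ℕ) : Continuous (fun u : Hsp => (u : ℕ → ℝ) j) := by
  refine (LipschitzWith.of_dist_le_mul (K := 1) fun u v => ?_).continuous
  rw [NNReal.coe_one, one_mul]
  have h := lp.norm_apply_le_norm (by norm_num : (2:ℝ≥0∞) ≠ 0) (u - v) j
  simpa [dist_eq_norm, Real.dist_eq, Real.norm_eq_abs] using h

lemma single_cont (i : ℕ) : Continuous (fun a : ℝ => (lp.single 2 i a : Hsp)) := by
  refine (LipschitzWith.of_dist_le_mul (K := 1) fun a b => ?_).continuous
  rw [NNReal.coe_one, one_mul, dist_eq_norm, dist_eq_norm]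
  have hsub : (lp.single 2 i a : Hsp) - lp.single 2 i b = lp.single 2 i (a - b) := by
    refine lp.ext (funext fun j => ?_)
    by_cases hj : j = i
    · subst hj; simp [lp.single_apply_self]
    · simp [lp.single_apply_ne (E := fun _ : ℕ => ℝ) 2 i _ hj]
  rw [hsub]
  have := lp.norm_single (E := fun _ : ℕ => ℝ) (p := 2) (by norm_num) i (a - b)
  rw [this]

lemma sum_single_apply (N : ℕ) (c : Fin N → ℝ) (j : ℕ) :
    (∑ i : Fin N, ((lp.single 2 (i:ℕ) (c i) : Hsp) : ℕ → ℝ)) j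
      = if h : j < N then c ⟨j, h⟩ else 0 := by
  rw [Finset.sum_apply]
  by_cases h : j < N
  · rw [dif_pos h, Finset.sum_eq_single (⟨j, h⟩ : Fin N)]
    · exact lp.single_apply_self (E := fun _ : ℕ => ℝ) 2 j (c ⟨j, h⟩)
    · intro i _ hne
      exact lp.single_apply_ne (E := fun _ : ℕ => ℝ) 2 (i:ℕ) _ (fun hji => hne (Fin.ext (by simp [← hji])))
    · simp
  · rw [dif_neg h]
    exact Finset.sum_eq_zero fun i _ =>
      lp.single_apply_ne (E := fun _ : ℕ => ℝ) 2 (i:ℕ) _ (fun hji => h (hji ▸ i.isLt))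

lemma ofX_eq_sum (s : ℝ) (N : ℕ) (x : Fin N → ℝ) :
    ofX s N x = ∑ i : Fin N, (lp.single 2 (i:ℕ) (wt s i * x i) : Hsp) := by
  refine lp.ext (funext fun j => ?_)
  rw [lp.coeFn_sum, sum_single_apply]
  rfl

lemma ofX_cont (s : ℝ) (N : ℕ) : Continuous (ofX s N) := by
  have : (ofX s N) = fun x => ∑ i : Fin N, (lp.single 2 (i:ℕ) (wt s i * x i) : Hsp) :=
    funext fun x => ofX_eq_sum s N x
  rw [this]
  exact continuous_finset_sum _ fun i _ =>
    (single_cont i).comp (continuous_const.mul (continuous_apply i))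

lemma range_sum_single (N : ℕ) (u : Hsp) :
    ∑ i ∈ Finset.range N, (lp.single 2 i ((u : ℕ → ℝ) i) : Hsp) = PNproj N u := by
  refine lp.ext (funext fun j => ?_)
  rw [lp.coeFn_sum, Finset.sum_apply]
  show _ = if j < N then (u : ℕ → ℝ) j else 0
  by_cases h : j < N
  · rw [if_pos h, Finset.sum_eq_single j]
    · exact lp.single_apply_self (E := fun _ : ℕ => ℝ) 2 j _
    · intro i _ hne
      exact lp.single_apply_ne (E := fun _ : ℕ => ℝ) 2 i _ (Ne.symm hne)
    · intro hj; exact absurd (Finset.mem_range.mpr h) hj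
  · rw [if_neg h]
    exact Finset.sum_eq_zero fun i hi =>
      lp.single_apply_ne (E := fun _ : ℕ => ℝ) 2 i _ (fun hji => h (hji ▸ Finset.mem_range.mp hi))

lemma tendsto_PNproj (u : Hsp) : Tendsto (fun N => PNproj N u) atTop (𝓝 u) := by
  have h := (lp.hasSum_single (by norm_num : (2:ℝ≥0∞) ≠ ⊤) u).tendsto_sum_nat
  simpa only [range_sum_single] using h

lemma PNproj_cont (N : ℕ) : Continuous (PNproj N) := by
  have : PNproj N = fun u : Hsp => ∑ i ∈ Finset.range N, (lp.single 2 i ((u : ℕ → ℝ) i) : Hsp) :=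
    funext fun u => (range_sum_single N u).symm
  rw [this]
  exact continuous_finset_sum _ fun i _ => (single_cont i).comp (coord_cont i)

lemma ofX_coords (s : ℝ) (N : ℕ) (u : Hsp) :
    ofX s N (fun i : Fin N => seqr s u i) = PNproj N u := by
  refine lp.ext (funext fun j => ?_)
  show (if h : j < N then wt s j * seqr s u j else 0) = if j < N then (u : ℕ → ℝ) j else 0
  by_cases h : j < N
  · rw [dif_pos h, if_pos h, seqr, wt, wt, ← mul_assoc, ← Real.rpow_add (by positivity),
      add_neg_cancel, Real.rpow_zero, one_mul]
  · rw [dif_neg h, if_neg h]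

lemma coords_cont (s : ℝ) (N : ℕ) : Continuous (fun u : Hsp => fun i : Fin N => seqr s u i) :=
  continuous_pi fun i => continuous_const.mul (coord_cont i)
theorem statement_8 (lam : ℕ → ℝ) (κ cminus cplus s : ℝ) (Ψ : Hsp → ℝ) (gradΨ : Hsp → Hsp)
    (M₁ M₂ M₃ M₄ : ℝ)
    (hκ : 1/2 < κ) (hcminus : 0 < cminus) (hcpm : cminus ≤ cplus)
    (hlampos : ∀ j : ℕ, 0 < lam j)
    (hlam : ∀ j : ℕ, cminus * wt (-κ) j ≤ lam j ∧ lam j ≤ cplus * wt (-κ) j)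
    (hs0 : 0 ≤ s) (hsκ : s < κ - 1/2)
    (hΨdiff : Differentiable ℝ Ψ) (hΨdiff2 : Differentiable ℝ (fderiv ℝ Ψ))
    (hgradrep : ∀ x h : Hsp, fderiv ℝ Ψ x h = ∑' j, seqr (-s) (gradΨ x) j * seqr s h j)
    (hΨlb : ∀ x : Hsp, M₁ ≤ Ψ x) (hΨub : ∀ x : Hsp, Ψ x ≤ M₂ * (1 + ‖x‖ ^ 2))
    (hgradb : ∀ x : Hsp, ‖gradΨ x‖ ≤ M₃ * (1 + ‖x‖))
    (hhessb : ∀ x : Hsp, ‖fderiv ℝ (fderiv ℝ Ψ) x‖ ≤ M₄)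
    (pi0 : Measure Hsp) (hprob : IsProbabilityMeasure pi0)
    (hpi0 : ∀ N : ℕ, pi0.map (fun u => fun i : Fin N => seqr s u i)
        = Measure.pi fun i : Fin N => gaussianReal 0 (Real.toNNReal (lam i ^ 2))):
    ∀ g : Hsp → ℝ, Continuous g → (∃ B : ℝ, ∀ u : Hsp, |g u| ≤ B) →
      Tendsto (fun N : ℕ => ∫ x, g (ofX s N x) ∂(piNref lam s Ψ N)) atTop
        (𝓝 (∫ u, g u ∂(piInf Ψ pi0))) := by
  intro g hg hgb
  obtain ⟨B, hB⟩ := hgb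
  have hΨc : Continuous Ψ := hΨdiff.continuous
  set e : Hsp → ℝ := fun u => Real.exp (-(Ψ u)) with he
  have hec : Continuous e := Real.continuous_exp.comp hΨc.neg
  have heb : ∀ u, e u ≤ Real.exp (-M₁) := fun u => Real.exp_le_exp.mpr (by linarith [hΨlb u])
  have hepos : ∀ u, 0 < e u := fun u => Real.exp_pos _
  have hBnn : 0 ≤ B := le_trans (abs_nonneg _) (hB 0)
  -- change of variables to pi0
  have hmap : ∀ (N : ℕ) (F : (Fin N → ℝ) → ℝ), Continuous F →
      ∫ x, F x ∂(pi0N lam N) = ∫ u, F (fun i : Fin N => seqr s u i) ∂pi0 := by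
    intro N F hF
    have h1 : pi0N lam N = pi0.map (fun u => fun i : Fin N => seqr s u i) := (hpi0 N).symm
    rw [h1, integral_map (coords_cont s N).measurable.aemeasurable hF.aestronglyMeasurable]
  have hPsiNc : ∀ N : ℕ, Continuous (PsiN s Ψ N) := fun N => hΨc.comp (ofX_cont s N)
  -- cN
  set cN : ℕ → ℝ := fun N => ∫ u, e (PNproj N u) ∂pi0 with hcNdef
  set c : ℝ := ∫ u, e u ∂pi0 with hcdef
  set I : ℕ → ℝ := fun N => ∫ u, e (PNproj N u) * g (PNproj N u) ∂pi0 with hIdef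
  set L : ℝ := ∫ u, e u * g u ∂pi0 with hLdef
  have hMPsiN : ∀ N : ℕ, MPsiN lam s Ψ N = (cN N)⁻¹ := by
    intro N
    have h2 : (∫ x, Real.exp (-(PsiN s Ψ N x)) ∂(pi0N lam N)) = cN N := by
      rw [hmap N (fun x => Real.exp (-(PsiN s Ψ N x))) ((hPsiNc N).neg.rexp)]
      refine integral_congr_ae (Eventually.of_forall fun u => ?_)
      show Real.exp (-(Ψ (ofX s N (fun i : Fin N => seqr s u i)))) = e (PNproj N u)
      rw [ofX_coords]
    rw [MPsiN, h2]
  have hMPsiNnn : ∀ N : ℕ, 0 ≤ MPsiN lam s Ψ N := fun N =>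
    inv_nonneg.mpr (integral_nonneg fun x => (Real.exp_pos _).le)
  -- key identity for the LHS integrals
  have key : ∀ N : ℕ, ∫ x, g (ofX s N x) ∂(piNref lam s Ψ N) = (cN N)⁻¹ * I N := by
    intro N
    have hdn : ∀ x : Fin N → ℝ, 0 ≤ MPsiN lam s Ψ N * Real.exp (-(PsiN s Ψ N x)) :=
      fun x => mul_nonneg (hMPsiNnn N) (Real.exp_pos _).le
    have hdc : Continuous fun x : Fin N → ℝ =>
        MPsiN lam s Ψ N * Real.exp (-(PsiN s Ψ N x)) :=
      continuous_const.mul (Real.continuous_exp.comp (hPsiNc N).neg)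
    have hmeas : Measurable fun x : Fin N → ℝ =>
        Real.toNNReal (MPsiN lam s Ψ N * Real.exp (-(PsiN s Ψ N x))) :=
      (continuous_real_toNNReal.comp hdc).measurable
    have h3 : ∫ x, g (ofX s N x) ∂(piNref lam s Ψ N)
        = ∫ x, (MPsiN lam s Ψ N * Real.exp (-(PsiN s Ψ N x))) * g (ofX s N x)
            ∂(pi0N lam N) := by
      rw [piNref]
      rw [show (fun x : Fin N → ℝ => ENNReal.ofReal
          (MPsiN lam s Ψ N * Real.exp (-(PsiN s Ψ N x))))
        = fun x : Fin N → ℝ => ((Real.toNNReal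
            (MPsiN lam s Ψ N * Real.exp (-(PsiN s Ψ N x))) : ℝ≥0) : ℝ≥0∞) from rfl]
      rw [integral_withDensity_eq_integral_smul hmeas]
      refine integral_congr_ae (Eventually.of_forall fun x => ?_)
      dsimp only
      rw [NNReal.smul_def, Real.coe_toNNReal _ (hdn x), smul_eq_mul]
    rw [h3, hmap N (fun x => (MPsiN lam s Ψ N * Real.exp (-(PsiN s Ψ N x))) * g (ofX s N x))
      (hdc.mul (hg.comp (ofX_cont s N)))]
    have h4 : (fun u : Hsp => (MPsiN lam s Ψ N *
          Real.exp (-(PsiN s Ψ N (fun i : Fin N => seqr s u i)))) *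
          g (ofX s N (fun i : Fin N => seqr s u i)))
        = fun u : Hsp => MPsiN lam s Ψ N * (e (PNproj N u) * g (PNproj N u)) := by
      funext u
      show (MPsiN lam s Ψ N *
          Real.exp (-(Ψ (ofX s N (fun i : Fin N => seqr s u i))))) *
          g (ofX s N (fun i : Fin N => seqr s u i)) = _
      rw [ofX_coords, mul_assoc]
    rw [h4, integral_const_mul, hMPsiN N]
  -- RHS identity
  have hMPsieq : MPsi Ψ pi0 = c⁻¹ := rfl
  have hcint : Integrable e pi0 :=
    Integrable.mono' (integrable_const (Real.exp (-M₁))) hec.aestronglyMeasurable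
      (Eventually.of_forall fun u => by
        rw [Real.norm_eq_abs, abs_of_pos (hepos u)]; exact heb u)
  have hcpos : 0 < c := by
    rw [hcdef]
    rw [integral_pos_iff_support_of_nonneg (fun u => (hepos u).le) hcint]
    have hsupp : Function.support e = Set.univ :=
      Set.eq_univ_of_forall fun u => (hepos u).ne'
    rw [hsupp, measure_univ]
    norm_num
  have hMPsinn : 0 ≤ MPsi Ψ pi0 := by rw [hMPsieq]; exact inv_nonneg.mpr hcpos.le
  have hRHS : ∫ u, g u ∂(piInf Ψ pi0) = c⁻¹ * L := by
    have hdn : ∀ u : Hsp, 0 ≤ MPsi Ψ pi0 * Real.exp (-(Ψ u)) :=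
      fun u => mul_nonneg hMPsinn (Real.exp_pos _).le
    have hdc : Continuous fun u : Hsp => MPsi Ψ pi0 * Real.exp (-(Ψ u)) :=
      continuous_const.mul (Real.continuous_exp.comp hΨc.neg)
    have hmeas : Measurable fun u : Hsp =>
        Real.toNNReal (MPsi Ψ pi0 * Real.exp (-(Ψ u))) :=
      (continuous_real_toNNReal.comp hdc).measurable
    rw [piInf]
    rw [show (fun u : Hsp => ENNReal.ofReal (MPsi Ψ pi0 * Real.exp (-(Ψ u))))
      = fun u : Hsp => ((Real.toNNReal (MPsi Ψ pi0 * Real.exp (-(Ψ u))) : ℝ≥0) : ℝ≥0∞)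
      from rfl]
    rw [integral_withDensity_eq_integral_smul hmeas]
    have h5 : (fun u : Hsp => Real.toNNReal (MPsi Ψ pi0 * Real.exp (-(Ψ u))) • g u)
        = fun u : Hsp => c⁻¹ * (e u * g u) := by
      funext u
      rw [NNReal.smul_def, Real.coe_toNNReal _ (hdn u), hMPsieq, smul_eq_mul, mul_assoc]
    rw [h5, integral_const_mul]
  -- dominated convergence
  have hDCTc : Tendsto cN atTop (𝓝 c) := by
    refine tendsto_integral_of_dominated_convergence (fun _ => Real.exp (-M₁))
      (fun N => (hec.comp (PNproj_cont N)).aestronglyMeasurable)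
      (integrable_const _) (fun N => Eventually.of_forall fun u => ?_)
      (Eventually.of_forall fun u => ?_)
    · rw [Real.norm_eq_abs, abs_of_pos (hepos _)]; exact heb _
    · exact (hec.tendsto u).comp (tendsto_PNproj u)
  have hDCTI : Tendsto I atTop (𝓝 L) := by
    refine tendsto_integral_of_dominated_convergence (fun _ => Real.exp (-M₁) * B)
      (fun N => ((hec.comp (PNproj_cont N)).mul (hg.comp (PNproj_cont N))).aestronglyMeasurable)
      (integrable_const _) (fun N => Eventually.of_forall fun u => ?_)
      (Eventually.of_forall fun u => ?_)
    · rw [Real.norm_eq_abs, abs_mul, abs_of_pos (hepos _)]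
      exact mul_le_mul (heb _) (hB _) (abs_nonneg _) (Real.exp_pos _).le
    · exact ((hec.tendsto u).comp (tendsto_PNproj u)).mul
        ((hg.tendsto u).comp (tendsto_PNproj u))
  rw [hRHS]
  simp only [key]
  exact (hDCTc.inv₀ hcpos.ne').mul hDCTI

end
end

section
/- For every p ≥ 1, sup_{N ≥ 1} ∫ ‖x‖_s^p dπ^N(x) < ∞. -/
open MeasureTheory ProbabilityTheory Real Filter
open scoped ENNReal NNReal Topology

noncomputable section

namespace Stmt9
open MeasureTheory

lemma wt_pos (r : ℝ) (j : ℕ) : 0 < wt r j :=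
  Real.rpow_pos_of_pos (by positivity) r

lemma wt_mul (a b : ℝ) (j : ℕ) : wt a j * wt b j = wt (a + b) j :=
  (Real.rpow_add (by positivity) a b).symm

lemma wt_sq (a : ℝ) (j : ℕ) : wt a j ^ 2 = wt (2 * a) j := by
  rw [sq, wt_mul, two_mul]

/-- the square of the `H^s` norm on `X^N`. -/
def usum (s : ℝ) (N : ℕ) (x : Fin N → ℝ) : ℝ := ∑ i : Fin N, wt (2 * s) i * x i ^ 2

lemma usum_nonneg (s : ℝ) (N : ℕ) (x : Fin N → ℝ) : 0 ≤ usum s N x :=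
  Finset.sum_nonneg fun i _ => by have := wt_pos (2*s) i; positivity

lemma xnorm_eq (s : ℝ) (N : ℕ) (x : Fin N → ℝ) :
    xnorm s N x = usum s N x ^ ((1:ℝ)/2) := rfl

lemma ofX_apply (s : ℝ) (N : ℕ) (x : Fin N → ℝ) (j : ℕ) :
    (ofX s N x : ℕ → ℝ) j = if h : j < N then wt s j * x ⟨j, h⟩ else 0 := rfl

lemma norm_ofX_sq (s : ℝ) (N : ℕ) (x : Fin N → ℝ) :
    ‖ofX s N x‖ ^ 2 = usum s N x := by
  have h2 : (0:ℝ) < (2 : ℝ≥0∞).toReal := by norm_num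
  have := lp.norm_rpow_eq_tsum h2 (ofX s N x)
  have h2' : ((2 : ℝ≥0∞)).toReal = (2:ℝ) := by norm_num
  rw [h2'] at this
  have hpow : ‖ofX s N x‖ ^ (2:ℝ) = ‖ofX s N x‖ ^ (2:ℕ) := by
    rw [← Real.rpow_natCast]; norm_num
  rw [← hpow, this]
  have hterm : ∀ j : ℕ, ‖(ofX s N x : ℕ → ℝ) j‖ ^ (2:ℝ)
      = (fun j => if h : j < N then wt (2*s) j * x ⟨j, h⟩ ^ 2 else 0) j := by
    intro j
    rw [ofX_apply]
    by_cases h : j < N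
    · simp only [dif_pos h, Real.norm_eq_abs]
      rw [show (2:ℝ) = ((2:ℕ):ℝ) by norm_num, Real.rpow_natCast]
      rw [sq_abs, mul_pow, wt_sq]; norm_num
    · simp [dif_neg h, Real.norm_eq_abs]
  rw [tsum_congr hterm, tsum_eq_sum (s := Finset.range N)
    (fun j hj => by rw [Finset.mem_range] at hj; simp [dif_neg hj])]
  rw [usum, ← Fin.sum_univ_eq_sum_range]
  exact Finset.sum_congr rfl fun i _ => by simp [i.isLt]

/-- `ofX` as a linear map. -/
def ofXL (s : ℝ) (N : ℕ) : (Fin N → ℝ) →ₗ[ℝ] Hsp where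
  toFun := ofX s N
  map_add' x y := by
    apply lp.ext
    rw [lp.coeFn_add]
    funext j
    simp only [Pi.add_apply, ofX_apply]
    by_cases h : j < N
    · simp [dif_pos h]; ring
    · simp [dif_neg h]
  map_smul' c x := by
    apply lp.ext
    rw [lp.coeFn_smul]
    funext j
    simp only [Pi.smul_apply, ofX_apply, RingHom.id_apply, smul_eq_mul]
    by_cases h : j < N
    · simp [dif_pos h]; ring
    · simp [dif_neg h]

lemma continuous_ofX (s : ℝ) (N : ℕ) : Continuous (ofX s N) :=
  (ofXL s N).continuous_of_finiteDimensional

end Stmt9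
namespace Stmt9
open MeasureTheory

/-- the `2k`-th moment of the unnormalized standard Gaussian. -/
def Ig (k : ℕ) : ℝ := ∫ x : ℝ, x ^ (2*k) * Real.exp (-(1/2) * x^2)

lemma pow_le_exp_quarter (k : ℕ) (x : ℝ) :
    x ^ (2*k) * Real.exp (-(1/2)*x^2) ≤ ((k.factorial : ℝ) * 4^k) * Real.exp (-(1/4)*x^2) := by
  have h1 : x ^ (2*k) ≤ (k.factorial : ℝ) * 4^k * Real.exp ((1/4) * x^2) := by
    have ht : (0:ℝ) ≤ x^2/4 := by positivity
    have h2 : (x^2/4)^k / (k.factorial : ℝ) ≤ Real.exp (x^2/4) := by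
      calc (x^2/4)^k / (k.factorial : ℝ)
          ≤ ∑ i ∈ Finset.range (k+1), (x^2/4)^i / (i.factorial : ℝ) := by
            apply Finset.single_le_sum (f := fun i => (x^2/4)^i / (i.factorial : ℝ))
              (fun i _ => by positivity) (Finset.self_mem_range_succ k)
        _ ≤ Real.exp (x^2/4) := Real.sum_le_exp_of_nonneg ht _
    have hkf : (0:ℝ) < (k.factorial : ℝ) := by exact_mod_cast k.factorial_pos
    have h3 := (div_le_iff₀ hkf).1 h2
    have hx : x ^ (2*k) = (x^2/4)^k * 4^k := by
      rw [div_pow, div_mul_cancel₀ _ (by positivity : ((4:ℝ)^k ≠ 0)), ← pow_mul]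
    rw [hx]
    calc (x^2/4)^k * 4^k ≤ (Real.exp (x^2/4) * (k.factorial : ℝ)) * 4^k :=
          mul_le_mul_of_nonneg_right h3 (by positivity)
      _ = (k.factorial : ℝ) * 4^k * Real.exp ((1/4) * x^2) := by
          rw [mul_comm (1/4 : ℝ) (x^2), ← div_eq_mul_one_div]; ring
  have hpos : (0:ℝ) ≤ Real.exp (-(1/2)*x^2) := (Real.exp_pos _).le
  calc x ^ (2*k) * Real.exp (-(1/2)*x^2)
      ≤ ((k.factorial : ℝ) * 4^k * Real.exp ((1/4) * x^2)) * Real.exp (-(1/2)*x^2) :=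
        mul_le_mul_of_nonneg_right h1 hpos
    _ = ((k.factorial : ℝ) * 4^k) * Real.exp (-(1/4)*x^2) := by
        rw [mul_assoc, ← Real.exp_add]; ring_nf

lemma pow_two_mul_nonneg (k : ℕ) (x : ℝ) : 0 ≤ x ^ (2*k) := by
  rw [mul_comm, pow_mul]; positivity

lemma integrable_pow_gauss (k : ℕ) :
    Integrable (fun x : ℝ => x ^ (2*k) * Real.exp (-(1/2) * x^2)) := by
  apply Integrable.mono'
    (((integrable_exp_neg_mul_sq (by norm_num : (0:ℝ) < 1/4)).const_mul
      ((k.factorial : ℝ) * 4^k)))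
  · exact (continuous_pow _ |>.mul (by continuity)).aestronglyMeasurable
  · filter_upwards with x
    rw [Real.norm_eq_abs, abs_of_nonneg
      (mul_nonneg (pow_two_mul_nonneg k x) (Real.exp_pos _).le)]
    simpa [neg_mul] using pow_le_exp_quarter k x

lemma Ig_nonneg (k : ℕ) : 0 ≤ Ig k :=
  integral_nonneg fun x => mul_nonneg (pow_two_mul_nonneg k x) (Real.exp_pos _).le

lemma Ig_zero_pos : 0 < Ig 0 := by
  have h0 : Ig 0 = ∫ x : ℝ, Real.exp (-(1/2) * x^2) := by unfold Ig; simp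
  rw [h0, integral_gaussian]
  positivity

section scaled
variable {σ : ℝ} (hσ : 0 < σ)

lemma scaled_eq (k : ℕ) (x : ℝ) :
    (x/σ)^(2*k) * Real.exp (-(1/2) * (x/σ)^2)
      = (x/σ)^(2*k) * Real.exp (-(1/(2*σ^2)) * x^2) := by
  congr 2
  rw [div_pow]
  field_simp

include hσ

lemma integrable_scaled (k : ℕ) :
    Integrable (fun x : ℝ => (x/σ)^(2*k) * Real.exp (-(1/(2*σ^2)) * x^2)) := by
  have h := (integrable_pow_gauss k).comp_div (ne_of_gt hσ)
  exact h.congr (Filter.Eventually.of_forall fun x => scaled_eq k x)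

lemma integral_scaled (k : ℕ) :
    ∫ x : ℝ, (x/σ)^(2*k) * Real.exp (-(1/(2*σ^2)) * x^2) = σ * Ig k := by
  have h1 : ∫ x : ℝ, (x/σ)^(2*k) * Real.exp (-(1/(2*σ^2)) * x^2)
      = ∫ x : ℝ, (x/σ) ^ (2*k) * Real.exp (-(1/2) * (x/σ)^2) :=
    integral_congr_ae (Filter.Eventually.of_forall fun x => (scaled_eq k x).symm)
  rw [h1]
  have h2 := MeasureTheory.Measure.integral_comp_div
    (fun u : ℝ => u ^ (2*k) * Real.exp (-(1/2) * u^2)) σ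
  rw [abs_of_pos hσ, smul_eq_mul] at h2
  rw [Ig]
  exact h2

end scaled

end Stmt9
namespace Stmt9
open MeasureTheory

section prodint
variable (lam : ℕ → ℝ) (N : ℕ)

/-- the one-dimensional Gaussian factor. -/
def gd (i : ℕ) (t : ℝ) : ℝ := Real.exp (-(1/(2 * lam i ^ 2)) * t ^ 2)

/-- the Gaussian weight on `X^N`. -/
def Gd (x : Fin N → ℝ) : ℝ := ∏ i : Fin N, gd lam i (x i)

variable (hlampos : ∀ j : ℕ, 0 < lam j)

lemma Gd_pos (x : Fin N → ℝ) : 0 < Gd lam N x :=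
  Finset.prod_pos fun i _ => Real.exp_pos _

lemma continuous_Gd : Continuous (Gd lam N) := by
  apply continuous_finset_prod
  intro i _
  have hgd : Continuous (gd lam i) := by unfold gd; continuity
  exact hgd.comp (continuous_apply i)

include hlampos

lemma Gd_eq (x : Fin N → ℝ) :
    Gd lam N x = Real.exp (-(1/2) * cnormsq lam N x) := by
  rw [Gd, cnormsq, Finset.mul_sum]
  simp only [gd]
  rw [Real.exp_sum]
  apply Finset.prod_congr rfl
  intro i _
  congr 1
  have := (hlampos (i : ℕ)).ne'
  field_simp

lemma integrable_gd (i : ℕ) : Integrable (gd lam i) := by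
  have : (0:ℝ) < 1/(2 * lam i ^ 2) := by have := hlampos i; positivity
  exact integrable_exp_neg_mul_sq this

lemma integral_gd (i : ℕ) : ∫ t : ℝ, gd lam i t = lam i * Ig 0 := by
  have h := integral_scaled (hσ := hlampos i) 0
  simpa [gd] using h

lemma integrable_Gd : Integrable (Gd lam N) :=
  Integrable.fintype_prod (f := fun i : Fin N => gd lam i)
    (fun i => integrable_gd lam hlampos i)

end prodint

/-- `Z`, the Gaussian normalization constant. -/
def Zc (lam : ℕ → ℝ) (N : ℕ) : ℝ := (∏ i : Fin N, lam i) * Ig 0 ^ N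

section prodint2
variable (lam : ℕ → ℝ) (N : ℕ) (hlampos : ∀ j : ℕ, 0 < lam j)

include hlampos

lemma Zc_pos : 0 < Zc lam N :=
  mul_pos (Finset.prod_pos fun i _ => hlampos i) (pow_pos Ig_zero_pos N)

lemma integral_Gd : ∫ x, Gd lam N x = Zc lam N := by
  rw [show (∫ x, Gd lam N x) = ∫ x : Fin N → ℝ, ∏ i : Fin N, gd lam i (x i) from rfl]
  rw [integral_fintype_prod_volume_eq_prod (f := fun i : Fin N => gd lam i)]
  rw [Finset.prod_congr rfl (fun (i : Fin N) _ => integral_gd lam hlampos i)]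
  rw [Finset.prod_mul_distrib, Finset.prod_const, Finset.card_univ, Fintype.card_fin, Zc]

end prodint2

/-- the deformed factor functions. -/
def gdm (lam : ℕ → ℝ) (m : ℕ) (i0 : ℕ) (j : ℕ) (t : ℝ) : ℝ :=
  (if j = i0 then (t / lam i0) ^ (2*m) else 1) * gd lam j t

section prodint3
variable (lam : ℕ → ℝ) (N : ℕ) (hlampos : ∀ j : ℕ, 0 < lam j)

lemma gdm_prod_eq (m : ℕ) (i0 : Fin N) (x : Fin N → ℝ) :
    ∏ j : Fin N, gdm lam m i0 j (x j) = (x i0 / lam i0) ^ (2*m) * Gd lam N x := by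
  unfold gdm Gd
  rw [Finset.prod_mul_distrib]
  congr 1
  simp only [Fin.val_eq_val]
  rw [Finset.prod_ite_eq' Finset.univ i0 (fun j : Fin N => (x j / lam i0) ^ (2*m))]
  simp

include hlampos

lemma integrable_gdm (m : ℕ) (i0 : ℕ) (j : ℕ) : Integrable (gdm lam m i0 j) := by
  unfold gdm
  by_cases h : j = i0
  · subst h
    simp only [if_pos rfl]
    have := integrable_scaled (hσ := hlampos j) m
    exact this
  · simp only [if_neg h, one_mul]
    exact integrable_gd lam hlampos j

lemma integral_gdm (m : ℕ) (i0 : ℕ) (j : ℕ) :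
    ∫ t : ℝ, gdm lam m i0 j t = lam j * (if j = i0 then Ig m else Ig 0) := by
  by_cases h : j = i0
  · subst h
    have h2 := integral_scaled (hσ := hlampos j) m
    simp only [gdm, if_pos rfl, if_true, eq_self_iff_true]
    exact h2
  · simp only [gdm, if_neg h, one_mul]
    rw [integral_gd lam hlampos j]

lemma integrable_mom (m : ℕ) (i0 : Fin N) :
    Integrable (fun x : Fin N → ℝ => (x i0 / lam i0) ^ (2*m) * Gd lam N x) := by
  have := Integrable.fintype_prod (f := fun j : Fin N => gdm lam m i0 j)
    (fun j => integrable_gdm lam hlampos m i0 j)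
  exact this.congr (Filter.Eventually.of_forall fun x => gdm_prod_eq lam N m i0 x)

lemma integral_mom (m : ℕ) (i0 : Fin N) :
    ∫ x : Fin N → ℝ, (x i0 / lam i0) ^ (2*m) * Gd lam N x
      = (Ig m / Ig 0) * Zc lam N := by
  have h1 : ∫ x : Fin N → ℝ, (x i0 / lam i0) ^ (2*m) * Gd lam N x
      = ∫ x : Fin N → ℝ, ∏ j : Fin N, gdm lam m i0 j (x j) :=
    integral_congr_ae (Filter.Eventually.of_forall fun x => (gdm_prod_eq lam N m i0 x).symm)
  rw [h1, integral_fintype_prod_volume_eq_prod (f := fun j : Fin N => gdm lam m i0 j)]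
  have h2 : ∀ j : Fin N, (∫ t : ℝ, gdm lam m (i0 : ℕ) j t)
      = lam j * ((if j = i0 then Ig m / Ig 0 else 1) * Ig 0) := by
    intro j
    rw [integral_gdm lam hlampos m i0 j]
    congr 1
    simp only [Fin.val_eq_val]
    by_cases h : j = i0
    · rw [if_pos h, if_pos h, div_mul_cancel₀ _ Ig_zero_pos.ne']
    · rw [if_neg h, if_neg h, one_mul]
  calc ∏ j : Fin N, ∫ t : ℝ, gdm lam m (i0:ℕ) (j:ℕ) t
      = ∏ j : Fin N, lam (j:ℕ) * ((if j = i0 then Ig m / Ig 0 else 1) * Ig 0) :=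
        Finset.prod_congr rfl fun j _ => h2 j
    _ = (∏ j : Fin N, lam (j:ℕ)) * ((∏ j : Fin N, (if j = i0 then Ig m / Ig 0 else 1))
          * ∏ _j : Fin N, Ig 0) := by
        rw [← Finset.prod_mul_distrib, ← Finset.prod_mul_distrib]
    _ = Ig m / Ig 0 * Zc lam N := by
        rw [Finset.prod_ite_eq' Finset.univ i0 (fun _ => Ig m / Ig 0),
          if_pos (Finset.mem_univ i0), Finset.prod_const, Finset.card_univ,
          Fintype.card_fin, Zc]
        ring

end prodint3
end Stmt9
namespace Stmt9
open MeasureTheory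

lemma summable_wt {q : ℝ} (hq : q < -1) : Summable (fun j : ℕ => wt q j) := by
  have h1 : Summable (fun n : ℕ => ((n:ℝ)) ^ q) := Real.summable_nat_rpow.2 hq
  have h2 := (summable_nat_add_iff (f := fun n : ℕ => ((n:ℝ)) ^ q) 1).2 h1
  apply h2.congr
  intro j
  unfold wt
  push_cast
  rfl

/-- the coefficients `c_i = (i+1)^{2s} λ_i²`. -/
def cw (lam : ℕ → ℝ) (s : ℝ) (i : ℕ) : ℝ := wt (2*s) i * lam i ^ 2

/-- their partial sums. -/
def Csum (lam : ℕ → ℝ) (s : ℝ) (N : ℕ) : ℝ := ∑ i : Fin N, cw lam s i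

/-- the uniform bound `S`. -/
def Sconst (κ cplus s : ℝ) : ℝ := cplus^2 * ∑' j : ℕ, wt (2*s - 2*κ) j

section moments
variable {lam : ℕ → ℝ} {κ cminus cplus s : ℝ} {N : ℕ}
  (hlampos : ∀ j : ℕ, 0 < lam j)
  (hlamub : ∀ j : ℕ, lam j ≤ cplus * wt (-κ) j)
  (hq : 2*s - 2*κ < -1)

include hlampos in
lemma cw_pos (i : ℕ) : 0 < cw lam s i :=
  mul_pos (wt_pos _ _) (pow_pos (hlampos i) 2)

include hlamub hlampos in
lemma cw_le (i : ℕ) : cw lam s i ≤ cplus^2 * wt (2*s - 2*κ) i := by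
  have h1 : lam i ^ 2 ≤ (cplus * wt (-κ) i) ^ 2 :=
    pow_le_pow_left₀ (hlampos i).le (hlamub i) 2
  have h2 : cw lam s i ≤ wt (2*s) i * (cplus * wt (-κ) i)^2 := by
    have := wt_pos (2*s) i
    exact mul_le_mul_of_nonneg_left h1 this.le
  refine h2.trans_eq ?_
  rw [mul_pow, wt_sq]
  have : wt (2*s) i * (cplus ^ 2 * wt (2 * -κ) i) = cplus^2 * (wt (2*s) i * wt (2*-κ) i) := by
    ring
  rw [this, wt_mul]
  ring_nf

include hlampos in
lemma Csum_pos (hN : 1 ≤ N) : 0 < Csum lam s N := by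
  unfold Csum
  exact Finset.sum_pos (fun i _ => cw_pos (s := s) hlampos i)
    ⟨(⟨0, hN⟩ : Fin N), Finset.mem_univ _⟩

include hlampos hlamub hq in
lemma Csum_le : Csum lam s N ≤ Sconst κ cplus s := by
  calc Csum lam s N ≤ ∑ i : Fin N, cplus^2 * wt (2*s - 2*κ) i :=
        Finset.sum_le_sum fun i _ => cw_le hlampos hlamub i
    _ = cplus^2 * ∑ i ∈ Finset.range N, wt (2*s - 2*κ) i := by
        rw [← Finset.mul_sum, Fin.sum_univ_eq_sum_range (fun j => wt (2*s-2*κ) j)]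
    _ ≤ Sconst κ cplus s := by
        apply mul_le_mul_of_nonneg_left _ (sq_nonneg cplus)
        exact Summable.sum_le_tsum _ (fun j _ => (wt_pos _ j).le) (summable_wt hq)

include hlampos in
lemma usum_eq_cw (x : Fin N → ℝ) :
    usum s N x = ∑ i : Fin N, cw lam s i * (x i / lam i)^2 := by
  apply Finset.sum_congr rfl
  intro i _
  rw [cw, div_pow]
  have := (hlampos (i:ℕ)).ne'
  field_simp

include hlampos in
lemma usum_pow_le (hN : 1 ≤ N) (m : ℕ) (x : Fin N → ℝ) :
    usum s N x ^ m ≤ Csum lam s N ^ m *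
      ∑ i : Fin N, (cw lam s i / Csum lam s N) * (x i / lam i)^(2*m) := by
  have hC := Csum_pos (lam := lam) (s := s) hlampos hN
  have key : (∑ i : Fin N, (cw lam s i / Csum lam s N) * (x i / lam i)^2) ^ m
      ≤ ∑ i : Fin N, (cw lam s i / Csum lam s N) * ((x i / lam i)^2)^m := by
    apply Real.pow_arith_mean_le_arith_mean_pow (Finset.univ : Finset (Fin N))
      (fun i : Fin N => cw lam s i / Csum lam s N) (fun i : Fin N => (x i / lam i)^2)
      (fun i _ => div_nonneg (cw_pos hlampos i).le hC.le)
      (by rw [← Finset.sum_div, show (∑ i : Fin N, cw lam s (i:ℕ)) = Csum lam s N from rfl, div_self hC.ne'])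
      (fun i _ => sq_nonneg _)
  have h1 : usum s N x = Csum lam s N *
      ∑ i : Fin N, (cw lam s i / Csum lam s N) * (x i / lam i)^2 := by
    rw [usum_eq_cw hlampos, Finset.mul_sum]
    apply Finset.sum_congr rfl
    intro i _
    rw [← mul_assoc, ← mul_div_assoc, mul_comm (Csum lam s N) (cw lam s (i:ℕ)), mul_div_cancel_right₀ _ hC.ne']
  rw [h1, mul_pow]
  refine mul_le_mul_of_nonneg_left ?_ (pow_nonneg hC.le m)
  refine key.trans_eq ?_
  exact Finset.sum_congr rfl fun i _ => by rw [← pow_mul]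

end moments
end Stmt9
namespace Stmt9
open MeasureTheory

lemma continuous_usum (s : ℝ) (N : ℕ) : Continuous (usum s N) := by
  unfold usum
  apply continuous_finset_sum
  intro i _
  exact (continuous_const.mul ((continuous_apply i).pow 2))

section intbounds
variable {lam : ℕ → ℝ} {κ cplus s : ℝ} {N : ℕ}
  (hlampos : ∀ j : ℕ, 0 < lam j)
  (hlamub : ∀ j : ℕ, lam j ≤ cplus * wt (-κ) j)
  (hq : 2*s - 2*κ < -1) (hN : 1 ≤ N)

/-- the dominating function for the `m`-th moment. -/
def bnd (lam : ℕ → ℝ) (s : ℝ) (N : ℕ) (m : ℕ) (x : Fin N → ℝ) : ℝ :=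
  ∑ i : Fin N, (Csum lam s N ^ m * (cw lam s i / Csum lam s N)) *
    ((x i / lam i) ^ (2*m) * Gd lam N x)

include hlampos in
lemma integrable_bnd (m : ℕ) : Integrable (bnd lam s N m) := by
  apply integrable_finset_sum
  intro i _
  exact (integrable_mom lam N hlampos m i).const_mul _

include hlampos hN in
lemma pointwise_bnd (m : ℕ) (x : Fin N → ℝ) :
    usum s N x ^ m * Gd lam N x ≤ bnd lam s N m x := by
  have h1 := usum_pow_le (lam := lam) (s := s) hlampos hN m x
  have h2 : usum s N x ^ m * Gd lam N x
      ≤ (Csum lam s N ^ m * ∑ i : Fin N, (cw lam s i / Csum lam s N) * (x i / lam i)^(2*m))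
        * Gd lam N x :=
    mul_le_mul_of_nonneg_right h1 (Gd_pos lam N x).le
  refine h2.trans_eq ?_
  rw [show bnd lam s N m x = ∑ i : Fin N, (Csum lam s N ^ m * (cw lam s (i:ℕ) / Csum lam s N)) *
      ((x i / lam (i:ℕ)) ^ (2*m) * Gd lam N x) from rfl, Finset.mul_sum, Finset.sum_mul]
  apply Finset.sum_congr rfl
  intro i _
  ring

include hlampos in
lemma integral_bnd (hN : 1 ≤ N) (m : ℕ) :
    ∫ x, bnd lam s N m x = Csum lam s N ^ m * (Ig m / Ig 0) * Zc lam N := by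
  unfold bnd
  rw [integral_finset_sum _ (fun i _ => (integrable_mom lam N hlampos m i).const_mul _)]
  have : ∀ i : Fin N, ∫ x : Fin N → ℝ, (Csum lam s N ^ m * (cw lam s (i:ℕ) / Csum lam s N)) *
      ((x i / lam (i:ℕ)) ^ (2*m) * Gd lam N x)
      = (Csum lam s N ^ m * (cw lam s (i:ℕ) / Csum lam s N)) * ((Ig m / Ig 0) * Zc lam N) := by
    intro i
    rw [MeasureTheory.integral_const_mul, integral_mom lam N hlampos m i]
  rw [Finset.sum_congr rfl (fun i _ => this i)]
  rw [← Finset.sum_mul, ← Finset.mul_sum, ← Finset.sum_div,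
    show (∑ i : Fin N, cw lam s (i:ℕ)) = Csum lam s N from rfl,
    div_self (Csum_pos (lam := lam) (s := s) hlampos hN).ne', mul_one]
  ring

include hlampos hN in
lemma integrable_usum_pow_Gd (m : ℕ) :
    Integrable (fun x => usum s N x ^ m * Gd lam N x) := by
  apply Integrable.mono' (integrable_bnd hlampos m)
  · exact (((continuous_usum s N).pow m).mul (continuous_Gd lam N)).aestronglyMeasurable
  · filter_upwards with x
    rw [Real.norm_eq_abs, abs_of_nonneg (mul_nonneg (pow_nonneg (usum_nonneg s N x) m)
      (Gd_pos lam N x).le)]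
    exact pointwise_bnd hlampos hN m x

include hlampos hlamub hq hN in
lemma integral_usum_pow_Gd_le (m : ℕ) :
    ∫ x, usum s N x ^ m * Gd lam N x
      ≤ Sconst κ cplus s ^ m * (Ig m / Ig 0) * Zc lam N := by
  have h1 : ∫ x, usum s N x ^ m * Gd lam N x ≤ ∫ x, bnd lam s N m x :=
    integral_mono (integrable_usum_pow_Gd hlampos hN m) (integrable_bnd hlampos m)
      (fun x => pointwise_bnd hlampos hN m x)
  rw [integral_bnd hlampos hN m] at h1
  refine h1.trans ?_
  have hC := Csum_pos (lam := lam) (s := s) hlampos hN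
  have hCS := Csum_le (κ := κ) hlampos hlamub hq (N := N)
  have : Csum lam s N ^ m ≤ Sconst κ cplus s ^ m := pow_le_pow_left₀ hC.le hCS m
  apply mul_le_mul_of_nonneg_right (mul_le_mul_of_nonneg_right this
    (div_nonneg (Ig_nonneg m) (Ig_nonneg 0))) (Zc_pos lam N hlampos).le

end intbounds
end Stmt9
namespace Stmt9
open MeasureTheory

/-- the unnormalized density of `π^N`. -/
def rho (lam : ℕ → ℝ) (s : ℝ) (Ψ : Hsp → ℝ) (N : ℕ) (x : Fin N → ℝ) : ℝ :=
  Real.exp (-(1/2) * cnormsq lam N x - PsiN s Ψ N x)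

/-- the Markov threshold `T`. -/
def Tc (κ cplus s : ℝ) : ℝ := 2 * Sconst κ cplus s * (Ig 1 / Ig 0) + 1

/-- the final bound. -/
def Bc (κ cplus s M₁ M₂ : ℝ) (m : ℕ) : ℝ :=
  2 * Real.exp (|M₂| * (1 + Tc κ cplus s) - M₁) *
    (1 + Sconst κ cplus s ^ m * (Ig m / Ig 0))

lemma Sconst_nonneg {κ cplus s : ℝ} (hq : 2*s - 2*κ < -1) : 0 ≤ Sconst κ cplus s :=
  mul_nonneg (sq_nonneg _) (tsum_nonneg fun j => (wt_pos _ j).le)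

lemma Tc_pos {κ cplus s : ℝ} (hq : 2*s - 2*κ < -1) : 0 < Tc κ cplus s := by
  have h1 := Sconst_nonneg (cplus := cplus) hq
  have h2 : 0 ≤ Ig 1 / Ig 0 := div_nonneg (Ig_nonneg 1) (Ig_nonneg 0)
  unfold Tc
  nlinarith

section final
variable {lam : ℕ → ℝ} {κ cplus s : ℝ} {Ψ : Hsp → ℝ} {M₁ M₂ : ℝ} {N : ℕ}
  (hlampos : ∀ j : ℕ, 0 < lam j)
  (hlamub : ∀ j : ℕ, lam j ≤ cplus * wt (-κ) j)
  (hq : 2*s - 2*κ < -1) (hN : 1 ≤ N)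
  (hΨc : Continuous Ψ)
  (hΨlb : ∀ x : Hsp, M₁ ≤ Ψ x) (hΨub : ∀ x : Hsp, Ψ x ≤ M₂ * (1 + ‖x‖ ^ 2))

include hΨc in
lemma continuous_PsiN : Continuous (PsiN s Ψ N) := hΨc.comp (continuous_ofX s N)

lemma continuous_cnormsq : Continuous (cnormsq lam N) := by
  unfold cnormsq
  apply continuous_finset_sum
  intro i _
  exact continuous_const.mul ((continuous_apply i).pow 2)

include hΨc in
lemma continuous_rho : Continuous (rho lam s Ψ N) := by
  unfold rho
  exact Real.continuous_exp.comp
    ((continuous_const.mul (continuous_cnormsq (lam := lam))).sub (continuous_PsiN hΨc))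

include hΨub in
lemma PsiN_ub (x : Fin N → ℝ) : PsiN s Ψ N x ≤ M₂ * (1 + usum s N x) := by
  have h := hΨub (ofX s N x)
  rwa [norm_ofX_sq] at h

include hlampos in
lemma rho_eq (x : Fin N → ℝ) :
    rho lam s Ψ N x = Gd lam N x * Real.exp (-(PsiN s Ψ N x)) := by
  rw [rho, sub_eq_add_neg, Real.exp_add, Gd_eq lam N hlampos]

lemma rho_pos (x : Fin N → ℝ) : 0 < rho lam s Ψ N x := Real.exp_pos _

include hlampos hΨlb in
lemma rho_le (x : Fin N → ℝ) : rho lam s Ψ N x ≤ Real.exp (-M₁) * Gd lam N x := by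
  rw [rho_eq hlampos, mul_comm]
  apply mul_le_mul_of_nonneg_right _ (Gd_pos lam N x).le
  exact Real.exp_le_exp.2 (neg_le_neg (hΨlb _))

include hlampos hΨlb hΨc in
lemma integrable_rho : Integrable (rho lam s Ψ N) := by
  apply Integrable.mono' ((integrable_Gd lam N hlampos).const_mul (Real.exp (-M₁)))
  · exact (continuous_rho hΨc).aestronglyMeasurable
  · filter_upwards with x
    rw [Real.norm_eq_abs, abs_of_pos (rho_pos x)]
    exact rho_le hlampos hΨlb x

include hlampos hlamub hq hN hΨc hΨlb in
lemma numerator_le {p : ℝ} (hp0 : 0 ≤ p) {m : ℕ} (hm2 : p ≤ (m:ℝ)) :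
    ∫ x, rho lam s Ψ N x * usum s N x ^ p
      ≤ (Real.exp (-M₁) * (1 + Sconst κ cplus s ^ m * (Ig m / Ig 0))) * Zc lam N := by
  have hfle : ∀ x : Fin N → ℝ, usum s N x ^ p ≤ 1 + usum s N x ^ m := by
    intro x
    have hu := usum_nonneg s N x
    rcases le_or_gt (usum s N x) 1 with h | h
    · have := Real.rpow_le_one hu h hp0
      have h2 : (0:ℝ) ≤ usum s N x ^ m := pow_nonneg hu m
      linarith
    · have h1 : usum s N x ^ p ≤ usum s N x ^ (m:ℝ) :=
        Real.rpow_le_rpow_of_exponent_le h.le hm2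
      rw [Real.rpow_natCast] at h1
      linarith
  have hmeasf : Measurable fun x : Fin N → ℝ => usum s N x ^ p :=
    (continuous_usum s N).measurable.pow_const p
  have hptwise : ∀ x, rho lam s Ψ N x * usum s N x ^ p
      ≤ Real.exp (-M₁) * (Gd lam N x + usum s N x ^ m * Gd lam N x) := by
    intro x
    have h0 : 0 ≤ usum s N x ^ p := Real.rpow_nonneg (usum_nonneg s N x) p
    have h1 : rho lam s Ψ N x * usum s N x ^ p
        ≤ (Real.exp (-M₁) * Gd lam N x) * usum s N x ^ p :=
      mul_le_mul_of_nonneg_right (rho_le hlampos hΨlb x) h0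
    refine h1.trans ?_
    have h2 : Gd lam N x * (usum s N x ^ p) ≤ Gd lam N x * (1 + usum s N x ^ m) :=
      mul_le_mul_of_nonneg_left (hfle x) (Gd_pos lam N x).le
    calc Real.exp (-M₁) * Gd lam N x * usum s N x ^ p
        = Real.exp (-M₁) * (Gd lam N x * usum s N x ^ p) := by ring
      _ ≤ Real.exp (-M₁) * (Gd lam N x * (1 + usum s N x ^ m)) :=
          mul_le_mul_of_nonneg_left h2 (Real.exp_pos _).le
      _ = Real.exp (-M₁) * (Gd lam N x + usum s N x ^ m * Gd lam N x) := by ring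
  have hintR : Integrable (fun x => Real.exp (-M₁) *
      (Gd lam N x + usum s N x ^ m * Gd lam N x)) :=
    ((integrable_Gd lam N hlampos).add (integrable_usum_pow_Gd hlampos hN m)).const_mul _
  have hintL : Integrable (fun x => rho lam s Ψ N x * usum s N x ^ p) := by
    apply Integrable.mono' hintR
    · exact ((continuous_rho hΨc).measurable.mul hmeasf).aestronglyMeasurable
    · filter_upwards with x
      rw [Real.norm_eq_abs, abs_of_nonneg (mul_nonneg (rho_pos x).le
        (Real.rpow_nonneg (usum_nonneg s N x) p))]
      exact hptwise x
  calc ∫ x, rho lam s Ψ N x * usum s N x ^ p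
      ≤ ∫ x, Real.exp (-M₁) * (Gd lam N x + usum s N x ^ m * Gd lam N x) :=
        integral_mono hintL hintR hptwise
    _ = Real.exp (-M₁) * ((∫ x, Gd lam N x) + ∫ x, usum s N x ^ m * Gd lam N x) := by
        rw [integral_const_mul, integral_add (integrable_Gd lam N hlampos)
          (integrable_usum_pow_Gd hlampos hN m)]
    _ ≤ Real.exp (-M₁) * (Zc lam N + Sconst κ cplus s ^ m * (Ig m / Ig 0) * Zc lam N) := by
        apply mul_le_mul_of_nonneg_left _ (Real.exp_pos _).le
        rw [integral_Gd lam N hlampos]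
        exact add_le_add_right (integral_usum_pow_Gd_le hlampos hlamub hq hN m) _
    _ = (Real.exp (-M₁) * (1 + Sconst κ cplus s ^ m * (Ig m / Ig 0))) * Zc lam N := by ring

include hlampos hlamub hq hN hΨc hΨub hΨlb in
lemma denominator_ge :
    (Real.exp (-(|M₂| * (1 + Tc κ cplus s))) / 2) * Zc lam N ≤ ∫ x, rho lam s Ψ N x := by
  set T := Tc κ cplus s with hTdef
  have hT : 0 < T := Tc_pos hq
  set A : Set (Fin N → ℝ) := {x | usum s N x ≤ T} with hAdef
  have hA : MeasurableSet A := (continuous_usum s N).measurable measurableSet_Iic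
  have hGint := integrable_Gd lam N hlampos
  have huG : Integrable (fun x => usum s N x * Gd lam N x) := by
    have := integrable_usum_pow_Gd (lam := lam) (s := s) hlampos hN 1
    simpa using this
  have huGle : ∫ x, usum s N x * Gd lam N x
      ≤ Sconst κ cplus s * (Ig 1 / Ig 0) * Zc lam N := by
    have := integral_usum_pow_Gd_le (lam := lam) (s := s) hlampos hlamub hq hN 1
    simpa using this
  -- Markov bound on the complement
  have hstep1 : ∫ x in Aᶜ, Gd lam N x ≤ ∫ x in Aᶜ, (1/T) * (usum s N x * Gd lam N x) := by
    apply setIntegral_mono_on hGint.integrableOn ((huG.const_mul (1/T)).integrableOn) hA.compl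
    intro x hx
    have hx' : T < usum s N x := by
      simp only [hAdef, Set.mem_compl_iff, Set.mem_setOf_eq, not_le] at hx
      exact hx
    have hG := (Gd_pos lam N x).le
    rw [one_div, ← mul_assoc]
    have h1 : 1 ≤ T⁻¹ * usum s N x := by
      rw [inv_mul_eq_div, le_div_iff₀ hT, one_mul]
      exact hx'.le
    nlinarith [mul_nonneg (sub_nonneg.2 h1) hG]
  have hstep2 : ∫ x in Aᶜ, (1/T) * (usum s N x * Gd lam N x)
      ≤ (1/T) * ∫ x, usum s N x * Gd lam N x := by
    rw [integral_const_mul]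
    apply mul_le_mul_of_nonneg_left _ (by positivity)
    apply setIntegral_le_integral huG
    filter_upwards with x
    exact mul_nonneg (usum_nonneg s N x) (Gd_pos lam N x).le
  have hhalf : (1/T) * (Sconst κ cplus s * (Ig 1 / Ig 0) * Zc lam N) ≤ Zc lam N / 2 := by
    have hZ := (Zc_pos lam N hlampos).le
    have ha : 0 ≤ Sconst κ cplus s * (Ig 1 / Ig 0) :=
      mul_nonneg (Sconst_nonneg hq) (div_nonneg (Ig_nonneg 1) (Ig_nonneg 0))
    rw [one_div, inv_mul_le_iff₀ hT, hTdef, Tc]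
    nlinarith
  have hcompl : ∫ x in Aᶜ, Gd lam N x ≤ Zc lam N / 2 := by
    refine (hstep1.trans hstep2).trans ?_
    refine (mul_le_mul_of_nonneg_left huGle (by positivity)).trans hhalf
  have hsplit : (∫ x in A, Gd lam N x) + (∫ x in Aᶜ, Gd lam N x) = ∫ x, Gd lam N x :=
    integral_add_compl hA hGint
  have hAhalf : Zc lam N / 2 ≤ ∫ x in A, Gd lam N x := by
    rw [integral_Gd lam N hlampos] at hsplit
    linarith
  -- on A the density is bounded below
  have hrhoA : ∀ x ∈ A, Real.exp (-(|M₂| * (1 + T))) * Gd lam N x ≤ rho lam s Ψ N x := by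
    intro x hx
    have hxA : usum s N x ≤ T := hx
    have hPsi : PsiN s Ψ N x ≤ |M₂| * (1 + T) := by
      have h1 : PsiN s Ψ N x ≤ M₂ * (1 + usum s N x) := PsiN_ub hΨub x
      rcases le_or_gt 0 M₂ with hM | hM
      · have : M₂ * (1 + usum s N x) ≤ M₂ * (1 + T) :=
          mul_le_mul_of_nonneg_left (by linarith) hM
        calc PsiN s Ψ N x ≤ M₂ * (1 + T) := h1.trans this
          _ ≤ |M₂| * (1 + T) :=
            mul_le_mul_of_nonneg_right (le_abs_self M₂) (by positivity)
      · have hu := usum_nonneg s N x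
        have h2 : M₂ * (1 + usum s N x) ≤ 0 := by nlinarith
        have h3 : (0:ℝ) ≤ |M₂| * (1 + T) := by positivity
        linarith
    rw [rho_eq hlampos, mul_comm (Gd lam N x)]
    apply mul_le_mul_of_nonneg_right _ (Gd_pos lam N x).le
    exact Real.exp_le_exp.2 (neg_le_neg hPsi)
  have hrhoint := integrable_rho (s := s) (N := N) hlampos hΨc hΨlb
  have h4 : ∫ x in A, Real.exp (-(|M₂| * (1 + T))) * Gd lam N x ≤ ∫ x in A, rho lam s Ψ N x :=
    setIntegral_mono_on ((hGint.const_mul _).integrableOn) hrhoint.integrableOn hA hrhoA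
  have h5 : ∫ x in A, Real.exp (-(|M₂| * (1 + T))) * Gd lam N x
      = Real.exp (-(|M₂| * (1 + T))) * ∫ x in A, Gd lam N x := integral_const_mul _ _
  have h6 : ∫ x in A, rho lam s Ψ N x ≤ ∫ x, rho lam s Ψ N x :=
    setIntegral_le_integral hrhoint (Filter.Eventually.of_forall fun x => (rho_pos x).le)
  have h7 : Real.exp (-(|M₂| * (1 + T))) * (Zc lam N / 2)
      ≤ Real.exp (-(|M₂| * (1 + T))) * ∫ x in A, Gd lam N x :=
    mul_le_mul_of_nonneg_left hAhalf (Real.exp_pos _).le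
  calc (Real.exp (-(|M₂| * (1 + T))) / 2) * Zc lam N
      = Real.exp (-(|M₂| * (1 + T))) * (Zc lam N / 2) := by ring
    _ ≤ Real.exp (-(|M₂| * (1 + T))) * ∫ x in A, Gd lam N x := h7
    _ = ∫ x in A, Real.exp (-(|M₂| * (1 + T))) * Gd lam N x := h5.symm
    _ ≤ ∫ x in A, rho lam s Ψ N x := h4
    _ ≤ ∫ x, rho lam s Ψ N x := h6

end final
end Stmt9
namespace Stmt9
open MeasureTheory

section assemble
variable {lam : ℕ → ℝ} {κ cplus s : ℝ} {Ψ : Hsp → ℝ} {M₁ M₂ : ℝ} {N : ℕ}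
  (hlampos : ∀ j : ℕ, 0 < lam j)
  (hlamub : ∀ j : ℕ, lam j ≤ cplus * wt (-κ) j)
  (hq : 2*s - 2*κ < -1) (hN : 1 ≤ N)
  (hΨc : Continuous Ψ)
  (hΨlb : ∀ x : Hsp, M₁ ≤ Ψ x) (hΨub : ∀ x : Hsp, Ψ x ≤ M₂ * (1 + ‖x‖ ^ 2))

include hlampos hlamub hq hN hΨc hΨlb hΨub in
lemma key_bound {p : ℝ} (hp0 : 0 ≤ p) {m : ℕ} (hm2 : p ≤ (m:ℝ)) :
    ∫ x, usum s N x ^ p ∂(piN lam s Ψ N) ≤ Bc κ cplus s M₁ M₂ m := by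
  set ρ : (Fin N → ℝ) → ℝ := rho lam s Ψ N with hρdef
  have hρmeas : Measurable ρ := (continuous_rho hΨc).measurable
  have hρint : Integrable ρ := integrable_rho (s := s) (N := N) hlampos hΨc hΨlb
  have hρnn : 0 ≤ᵐ[(volume : Measure (Fin N → ℝ))] ρ :=
    Filter.Eventually.of_forall fun x => (rho_pos x).le
  set D : ℝ := ∫ x, ρ x with hDdef
  -- rewrite the π^N integral
  have hπ : piN lam s Ψ N
      = ((volume.withDensity fun x => ENNReal.ofReal (ρ x)) Set.univ)⁻¹ •
        (volume.withDensity fun x => ENNReal.ofReal (ρ x)) := rfl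
  have hμuniv : (volume.withDensity fun x => ENNReal.ofReal (ρ x)) Set.univ
      = ENNReal.ofReal D := by
    rw [withDensity_apply _ MeasurableSet.univ, setLIntegral_univ,
      ← ofReal_integral_eq_lintegral_ofReal hρint hρnn]
  have hint : ∫ x, usum s N x ^ p ∂(volume.withDensity fun x => ENNReal.ofReal (ρ x))
      = ∫ x, ρ x * usum s N x ^ p := by
    have heq : (fun x => ENNReal.ofReal (ρ x))
        = fun x => ((fun y => (ρ y).toNNReal) x : ℝ≥0∞) := rfl
    rw [heq, integral_withDensity_eq_integral_smul hρmeas.real_toNNReal]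
    apply integral_congr_ae
    filter_upwards with x
    rw [NNReal.smul_def, Real.coe_toNNReal _ (rho_pos x).le, smul_eq_mul]
  rw [hπ, integral_smul_measure, hμuniv, hint, ENNReal.toReal_inv,
    ENNReal.toReal_ofReal (integral_nonneg fun x => (rho_pos x).le), smul_eq_mul]
  -- numerator and denominator bounds
  set aC : ℝ := Real.exp (-M₁) * (1 + Sconst κ cplus s ^ m * (Ig m / Ig 0)) with haC
  set bC : ℝ := Real.exp (-(|M₂| * (1 + Tc κ cplus s))) / 2 with hbC
  have hNum : ∫ x, ρ x * usum s N x ^ p ≤ aC * Zc lam N :=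
    numerator_le hlampos hlamub hq hN hΨc hΨlb hp0 hm2
  have hDen : bC * Zc lam N ≤ D :=
    denominator_ge hlampos hlamub hq hN hΨc hΨlb hΨub
  have hZ := Zc_pos lam N hlampos
  have haCnn : 0 ≤ aC := by
    apply mul_nonneg (Real.exp_pos _).le
    have h1 : 0 ≤ Sconst κ cplus s ^ m := pow_nonneg (Sconst_nonneg hq) m
    have h2 : 0 ≤ Ig m / Ig 0 := div_nonneg (Ig_nonneg m) (Ig_nonneg 0)
    nlinarith
  have hbCpos : 0 < bC := by positivity
  have hfrac : D⁻¹ * ∫ x, ρ x * usum s N x ^ p ≤ (aC * Zc lam N) / (bC * Zc lam N) := by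
    rw [inv_mul_eq_div]
    exact div_le_div₀ (mul_nonneg haCnn hZ.le) hNum (mul_pos hbCpos hZ) hDen
  refine hfrac.trans ?_
  rw [mul_div_mul_right _ _ hZ.ne']
  rw [Bc, haC, hbC]
  rw [Real.exp_sub, Real.exp_neg (|M₂| * (1 + Tc κ cplus s)), Real.exp_neg M₁]
  have hE1 := Real.exp_pos (|M₂| * (1 + Tc κ cplus s))
  have hE2 := Real.exp_pos M₁
  field_simp
  ring_nf
  exact le_rfl

end assemble
end Stmt9
theorem statement_9 (lam : ℕ → ℝ) (κ cminus cplus s : ℝ) (Ψ : Hsp → ℝ) (gradΨ : Hsp → Hsp)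
    (M₁ M₂ M₃ M₄ : ℝ)
    (hκ : 1/2 < κ) (hcminus : 0 < cminus) (hcpm : cminus ≤ cplus)
    (hlampos : ∀ j : ℕ, 0 < lam j)
    (hlam : ∀ j : ℕ, cminus * wt (-κ) j ≤ lam j ∧ lam j ≤ cplus * wt (-κ) j)
    (hs0 : 0 ≤ s) (hsκ : s < κ - 1/2)
    (hΨdiff : Differentiable ℝ Ψ) (hΨdiff2 : Differentiable ℝ (fderiv ℝ Ψ))
    (hgradrep : ∀ x h : Hsp, fderiv ℝ Ψ x h = ∑' j, seqr (-s) (gradΨ x) j * seqr s h j)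
    (hΨlb : ∀ x : Hsp, M₁ ≤ Ψ x) (hΨub : ∀ x : Hsp, Ψ x ≤ M₂ * (1 + ‖x‖ ^ 2))
    (hgradb : ∀ x : Hsp, ‖gradΨ x‖ ≤ M₃ * (1 + ‖x‖))
    (hhessb : ∀ x : Hsp, ‖fderiv ℝ (fderiv ℝ Ψ) x‖ ≤ M₄):
    ∀ p : ℝ, 1 ≤ p → ∃ B : ℝ, ∀ N : ℕ, 1 ≤ N →
      (∫ x, xnorm s N x ^ p ∂(piN lam s Ψ N)) ≤ B := by
  intro p hp
  refine ⟨Stmt9.Bc κ cplus s M₁ M₂ ⌈p/2⌉₊, fun N hN => ?_⟩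
  have hq : 2*s - 2*κ < -1 := by linarith
  have hlamub : ∀ j : ℕ, lam j ≤ cplus * wt (-κ) j := fun j => (hlam j).2
  have hp0 : 0 ≤ p/2 := by linarith
  have hm2 : p/2 ≤ (⌈p/2⌉₊ : ℝ) := Nat.le_ceil _
  have hcong : ∫ x, xnorm s N x ^ p ∂(piN lam s Ψ N)
      = ∫ x, Stmt9.usum s N x ^ (p/2) ∂(piN lam s Ψ N) := by
    apply integral_congr_ae
    filter_upwards with x
    rw [Stmt9.xnorm_eq, ← Real.rpow_mul (Stmt9.usum_nonneg s N x),
      show (1:ℝ)/2 * p = p/2 by ring]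
  rw [hcong]
  exact Stmt9.key_bound hlampos hlamub hq hN hΨdiff.continuous hΨlb hΨub hp0 hm2

end
end
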